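/- Let G be a group, r a positive integer, and ρ : G → GL(r, ℂ) a group homomorphism whose kernel is a finite group. Then G is finite if and only if there exists a positive integer d such that every element of the image ρ(G) has finite order at most d. -/

import Mathlib

open Polynomial Matrix

private lemma root_charpoly_pow_eq_one {r N : ℕ} {A : Matrix (Fin r) (Fin r) ℂ}
    (hA : A ^ N = 1) {μ : ℂ} (hμ : μ ∈ A.charpoly.roots) : μ ^ N = 1 := by
  have hroot : A.charpoly.IsRoot μ := (Polynomial.mem_roots A.charpoly_monic.ne_zero).mp hμ
  have hmap : (charmatrix A).map (Polynomial.evalRingHom μ) = Matrix.scalar (Fin r) μ - A := by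
    ext i j
    by_cases h : i = j
    · subst h
      simp [charmatrix_apply_eq, Matrix.scalar_apply]
    · simp [charmatrix_apply_ne _ _ _ h, Matrix.scalar_apply, Matrix.one_apply_ne h,
        Matrix.diagonal_apply_ne _ h]
  have hdet : (Matrix.scalar (Fin r) μ - A).det = 0 := by
    have := RingHom.map_det (Polynomial.evalRingHom μ) (charmatrix A)
    rw [RingHom.mapMatrix_apply, hmap] at this
    rw [← this]
    simpa [Matrix.charpoly] using hroot
  obtain ⟨v, hv0, hv⟩ := Matrix.exists_mulVec_eq_zero_iff.mpr hdet
  have hAv : A.mulVec v = μ • v := by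
    have := hv
    rw [Matrix.sub_mulVec, sub_eq_zero] at this
    rw [← this]
    ext i
    simp [Matrix.mulVec_diagonal, Algebra.algebraMap_eq_smul_one]
  have key : ∀ k : ℕ, (A ^ k).mulVec v = μ ^ k • v := by
    intro k
    induction k with
    | zero => simp [Matrix.one_mulVec]
    | succ k ih =>
      rw [pow_succ', pow_succ', ← Matrix.mulVec_mulVec, ih, Matrix.mulVec_smul, hAv,
        smul_smul, mul_comm]
  have h1 : μ ^ N • v = v := by rw [← key, hA, Matrix.one_mulVec]
  obtain ⟨i, hi⟩ := Function.ne_iff.mp hv0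
  have hvi : μ ^ N * v i = v i := by simpa using congrFun h1 i
  have h2 : (μ ^ N - 1) * v i = 0 := by ring_nf; linear_combination hvi
  rcases mul_eq_zero.mp h2 with h | h
  · exact sub_eq_zero.mp h
  · exact absurd h hi

private lemma trace_decomp {r N : ℕ} (A : Matrix (Fin r) (Fin r) ℂ) (hA : A ^ N = 1) :
    ∃ f : Fin r → ℂ, (∀ i, f i ^ N = 1) ∧ A.trace = ∑ i, f i := by
  have hsp : A.charpoly.Splits := IsAlgClosed.splits _
  have hcard : A.charpoly.roots.card = r := by
    rw [(Polynomial.splits_iff_card_roots).mp hsp, Matrix.charpoly_natDegree_eq_dim,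
      Fintype.card_fin]
  set l := A.charpoly.roots.toList with hl
  have hlen : l.length = r := by rw [hl, Multiset.length_toList, hcard]
  refine ⟨fun i => l.get (Fin.cast hlen.symm i), fun i => ?_, ?_⟩
  · apply root_charpoly_pow_eq_one hA
    rw [show (fun i => l.get (Fin.cast hlen.symm i)) i = l.get (Fin.cast hlen.symm i) from rfl,
      ← Multiset.mem_toList]
    exact l.get_mem _
  · rw [Matrix.trace_eq_sum_roots_charpoly, ← Multiset.sum_toList, ← hl]
    rw [← List.sum_ofFn (f := fun i : Fin r => l.get (Fin.cast hlen.symm i))]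
    congr 1
    apply List.ext_get (by simp [hlen])
    intro n h1 h2
    simp

private lemma abs_eq_one_of_pow {μ : ℂ} {N : ℕ} (hN : 0 < N) (h : μ ^ N = 1) :
    ‖μ‖ = 1 := by
  have h1 : ‖μ‖ ^ N = 1 := by
    rw [← norm_pow, h]; simp
  have h0 : 0 ≤ ‖μ‖ := norm_nonneg _
  by_contra hne
  rcases lt_or_gt_of_ne hne with hlt | hgt
  · exact absurd h1 (by nlinarith [pow_lt_one₀ h0 hlt hN.ne'])
  · exact absurd h1 (by nlinarith [one_lt_pow₀ hgt hN.ne'])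

private lemma eq_one_of_pow_eq_one_of_trace {r N : ℕ} (hr : 0 < r) (hN : 0 < N)
    {A : Matrix (Fin r) (Fin r) ℂ} (hA : A ^ N = 1) (htr : A.trace = r) : A = 1 := by
  haveI : NeZero r := ⟨hr.ne'⟩
  have hsp : A.charpoly.Splits := IsAlgClosed.splits _
  have hcard : A.charpoly.roots.card = r := by
    rw [Polynomial.splits_iff_card_roots.mp hsp, Matrix.charpoly_natDegree_eq_dim,
      Fintype.card_fin]
  have hs : A.charpoly.roots.sum = (r : ℂ) := by
    rw [← Matrix.trace_eq_sum_roots_charpoly, htr]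
  have hresum : (A.charpoly.roots.map Complex.re).sum = (r : ℝ) := by
    have h1 := map_multiset_sum Complex.reAddGroupHom A.charpoly.roots
    simp only [Complex.reAddGroupHom, AddMonoidHom.coe_mk, ZeroHom.coe_mk] at h1
    rw [← h1, hs]
    simp
  have hall : ∀ μ ∈ A.charpoly.roots, μ = 1 := by
    intro μ hμ
    by_contra hne
    have hr1 : 1 ≤ r := hr
    have hpow := root_charpoly_pow_eq_one hA hμ
    have habs : ‖μ‖ = 1 := abs_eq_one_of_pow hN hpow
    have hrelt : μ.re < 1 := by
      rcases lt_or_eq_of_le ((Complex.re_le_norm μ).trans_eq habs) with h | h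
      · exact h
      · exfalso
        apply hne
        have him : μ.im = 0 := by
          have h2 := Complex.sq_norm μ
          rw [habs, Complex.normSq_apply] at h2
          nlinarith
        exact Complex.ext h him
    have hcons : μ ::ₘ A.charpoly.roots.erase μ = A.charpoly.roots := Multiset.cons_erase hμ
    set e := (A.charpoly.roots.erase μ).map Complex.re with he
    have hbound : e.sum ≤ e.card • (1 : ℝ) := by
      apply Multiset.sum_le_card_nsmul
      intro x hx
      obtain ⟨ζ, hζ, rfl⟩ := Multiset.mem_map.mp hx
      have hζr : ζ ∈ A.charpoly.roots := Multiset.mem_of_mem_erase hζ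
      exact (Complex.re_le_norm ζ).trans_eq (abs_eq_one_of_pow hN (root_charpoly_pow_eq_one hA hζr))
    have hcarde : e.card = r - 1 := by
      rw [he, Multiset.card_map, Multiset.card_erase_of_mem hμ, hcard]
      rfl
    have hsplit : (A.charpoly.roots.map Complex.re).sum = μ.re + e.sum := by
      rw [← hcons, Multiset.map_cons, Multiset.sum_cons]
    rw [hsplit] at hresum
    rw [hcarde] at hbound
    have hcast : ((r - 1 : ℕ) : ℝ) = (r : ℝ) - 1 := by
      rw [Nat.cast_sub hr1, Nat.cast_one]
    rw [nsmul_eq_mul, hcast, mul_one] at hbound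
    linarith
  -- minpoly argument
  have hint : IsIntegral ℂ A := ⟨A.charpoly, A.charpoly_monic, A.aeval_self_charpoly⟩
  have hdvdXN : minpoly ℂ A ∣ X ^ N - 1 := minpoly.dvd ℂ A (by simp [hA])
  have hsep : (X ^ N - 1 : ℂ[X]).Separable := by
    have := Polynomial.separable_X_pow_sub_C (1 : ℂ)
      (by exact_mod_cast Nat.cast_ne_zero.mpr hN.ne') one_ne_zero
    simpa using this
  have hsq : Squarefree (minpoly ℂ A) := (hsep.of_dvd hdvdXN).squarefree
  have hdvdc : minpoly ℂ A ∣ A.charpoly := Matrix.minpoly_dvd_charpoly A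
  have hrootsle : (minpoly ℂ A).roots ≤ A.charpoly.roots :=
    Polynomial.roots.le_of_dvd A.charpoly_monic.ne_zero hdvdc
  have hmonic : (minpoly ℂ A).Monic := minpoly.monic hint
  have hspl : (minpoly ℂ A).Splits := IsAlgClosed.splits _
  have hprod := hspl.eq_prod_roots_of_monic hmonic
  have hroots1 : ∀ x ∈ (minpoly ℂ A).roots, x = 1 := fun x hx =>
    hall x (Multiset.mem_of_le hrootsle hx)
  have hrep : (minpoly ℂ A).roots = Multiset.replicate (minpoly ℂ A).roots.card 1 :=
    Multiset.eq_replicate_card.mpr hroots1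
  have hform : minpoly ℂ A = (X - C 1) ^ (minpoly ℂ A).roots.card := by
    conv_lhs => rw [hprod, hrep]
    rw [Multiset.map_replicate, Multiset.prod_replicate]
  have hcard1 : (minpoly ℂ A).roots.card = 1 := by
    have hpos : 0 < (minpoly ℂ A).natDegree := minpoly.natDegree_pos hint
    have hcardeq : (minpoly ℂ A).roots.card = (minpoly ℂ A).natDegree :=
      Polynomial.splits_iff_card_roots.mp hspl
    by_contra hne1
    have h2 : 2 ≤ (minpoly ℂ A).roots.card := by omega
    have hdd : (X - C 1) * (X - C 1) ∣ minpoly ℂ A := by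
      rw [hform, ← pow_two]
      exact pow_dvd_pow _ h2
    exact Polynomial.not_isUnit_X_sub_C 1 (hsq _ hdd)
  have hmin : minpoly ℂ A = X - C 1 := by rw [hform, hcard1, pow_one]
  have haev := minpoly.aeval ℂ A
  rw [hmin] at haev
  simp only [map_sub, aeval_X, aeval_C] at haev
  have h0 : A - 1 = 0 := by simpa using haev
  exact sub_eq_zero.mp h0

theorem finite_iff_image_bounded_exponent (G : Type*) [Group G] (r : ℕ) (hr : 0 < r)
    (ρ : G →* Matrix.GeneralLinearGroup (Fin r) ℂ)
    (hker : (ρ.ker : Set G).Finite) :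
    Finite G ↔ ∃ d : ℕ, 0 < d ∧ ∀ g : G, IsOfFinOrder (ρ g) ∧ orderOf (ρ g) ≤ d := by
  constructor
  · intro hG
    have hpos : 0 < Nat.card G := Nat.card_pos
    refine ⟨Nat.card G, hpos, fun g => ?_⟩
    have h1 : orderOf (ρ g) ∣ Nat.card G := (orderOf_map_dvd ρ g).trans (orderOf_dvd_natCard g)
    have h2 : IsOfFinOrder (ρ g) := by
      rw [← orderOf_pos_iff]
      rcases Nat.eq_zero_or_pos (orderOf (ρ g)) with h | h
      · rw [h] at h1
        exact absurd (Nat.eq_zero_of_zero_dvd h1) hpos.ne'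
      · exact h
    exact ⟨h2, Nat.le_of_dvd hpos h1⟩
  · rintro ⟨d, hd, hbd⟩
    set N := Nat.factorial d with hN
    have hNpos : 0 < N := Nat.factorial_pos d
    have hpow : ∀ g : G, ((ρ g : Matrix (Fin r) (Fin r) ℂ)) ^ N = 1 := by
      intro g
      have h1 : (ρ g) ^ N = 1 :=
        orderOf_dvd_iff_pow_eq_one.mp (Nat.dvd_factorial (hbd g).1.orderOf_pos (hbd g).2)
      have := congrArg (Units.val) h1
      simpa using this
    -- the finite set of possible traces
    set T : Set ℂ := (fun f : Fin r → ℂ => ∑ i, f i) '' {f | ∀ i, f i ^ N = 1} with hT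
    have hTfin : T.Finite := by
      apply Set.Finite.image
      have hsub : {f : Fin r → ℂ | ∀ i, f i ^ N = 1} ⊆
          Set.pi Set.univ (fun _ : Fin r => {z : ℂ | z ^ N = 1}) := fun f hf i _ => hf i
      refine Set.Finite.subset (Set.Finite.pi fun i => ?_) hsub
      refine Set.Finite.subset (Polynomial.finite_setOf_isRoot
        (p := (X ^ N - 1 : ℂ[X])) ?_) ?_
      · have h := Polynomial.X_pow_sub_C_ne_zero hNpos (1 : ℂ)
        simpa using h
      · intro z hz
        simp only [Set.mem_setOf_eq] at hz ⊢
        simp [Polynomial.IsRoot, hz]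
    have htrace_memT : ∀ g : G, ((ρ g : Matrix (Fin r) (Fin r) ℂ)).trace ∈ T := by
      intro g
      obtain ⟨f, hf, hft⟩ := trace_decomp _ (hpow g)
      exact ⟨f, hf, hft.symm⟩
    -- span of the image and a finite spanning subset
    set S : Set (Matrix (Fin r) (Fin r) ℂ) :=
      Set.range (fun g : G => (ρ g : Matrix (Fin r) (Fin r) ℂ)) with hS
    obtain ⟨t, hts, hspan, hli⟩ := exists_linearIndependent ℂ S
    have htfin : t.Finite := hli.setFinite
    haveI : Finite t := htfin.to_subtype
    have hcoe : ∀ a b : G, (ρ a : Matrix (Fin r) (Fin r) ℂ) * (ρ b : Matrix (Fin r) (Fin r) ℂ)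
        = (ρ (a * b) : Matrix (Fin r) (Fin r) ℂ) := by
      intro a b
      rw [_root_.map_mul]
      rfl
    -- injectivity
    have hinj : ∀ g1 g2 : G,
        (∀ m ∈ t, ((ρ g1 : Matrix (Fin r) (Fin r) ℂ) * m).trace
          = ((ρ g2 : Matrix (Fin r) (Fin r) ℂ) * m).trace) → ρ g1 = ρ g2 := by
      intro g1 g2 hEq
      set B : Matrix (Fin r) (Fin r) ℂ :=
        (ρ g1 : Matrix (Fin r) (Fin r) ℂ) - (ρ g2 : Matrix (Fin r) (Fin r) ℂ) with hB
      set L : Matrix (Fin r) (Fin r) ℂ →ₗ[ℂ] ℂ :=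
        (Matrix.traceLinearMap (Fin r) ℂ ℂ).comp (LinearMap.mulLeft ℂ B) with hL
      have hker : Submodule.span ℂ t ≤ LinearMap.ker L := by
        rw [Submodule.span_le]
        intro m hm
        have : L m = 0 := by
          simp only [hL, LinearMap.comp_apply, LinearMap.mulLeft_apply,
            Matrix.traceLinearMap_apply, hB, Matrix.sub_mul, Matrix.trace_sub]
          rw [hEq m hm, sub_self]
        exact this
      have hmem : ((ρ g1⁻¹ : Matrix (Fin r) (Fin r) ℂ)) ∈ Submodule.span ℂ t := by
        rw [hspan]
        exact Submodule.subset_span ⟨g1⁻¹, rfl⟩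
      have hL0 : L ((ρ g1⁻¹ : Matrix (Fin r) (Fin r) ℂ)) = 0 := hker hmem
      simp only [hL, LinearMap.comp_apply, LinearMap.mulLeft_apply,
        Matrix.traceLinearMap_apply, hB, Matrix.sub_mul, Matrix.trace_sub] at hL0
      have htr : ((ρ g2 : Matrix (Fin r) (Fin r) ℂ)
          * (ρ g1⁻¹ : Matrix (Fin r) (Fin r) ℂ)).trace = r := by
        have h1 : ((ρ g1 : Matrix (Fin r) (Fin r) ℂ)
            * (ρ g1⁻¹ : Matrix (Fin r) (Fin r) ℂ)).trace = r := by
          rw [hcoe, mul_inv_cancel, _root_.map_one]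
          simp [Matrix.trace_one]
        rw [← sub_eq_zero.mp hL0, h1]
      rw [hcoe] at htr
      have hone : (ρ (g2 * g1⁻¹) : Matrix (Fin r) (Fin r) ℂ) = 1 :=
        eq_one_of_pow_eq_one_of_trace hr hNpos (hpow _) htr
      have : ρ (g2 * g1⁻¹) = 1 := Units.ext hone
      rw [_root_.map_mul, map_inv] at this
      exact (mul_inv_eq_one.mp this).symm
    -- range of ρ is finite
    have hrangefin : (Set.range ρ).Finite := by
      set F : Matrix.GeneralLinearGroup (Fin r) ℂ → (t → ℂ) :=
        fun u => fun m => ((u : Matrix (Fin r) (Fin r) ℂ) * (m : Matrix (Fin r) (Fin r) ℂ)).trace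
        with hF
      have hinj' : Set.InjOn F (Set.range ρ) := by
        rintro _ ⟨g1, rfl⟩ _ ⟨g2, rfl⟩ h
        exact hinj g1 g2 fun m hm => congrFun h ⟨m, hm⟩
      apply Set.Finite.of_finite_image ?_ hinj'
      have hpi : (Set.pi Set.univ fun _ : t => T).Finite := Set.Finite.pi fun _ => hTfin
      apply Set.Finite.subset hpi
      rintro _ ⟨_, ⟨g, rfl⟩, rfl⟩
      intro m _
      obtain ⟨h1, hh1⟩ := hts m.2
      simp only [hF]
      rw [← hh1, hcoe]
      exact htrace_memT _
    -- conclude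
    haveI hfr : Finite ρ.range := by
      have : (ρ.range : Set (Matrix.GeneralLinearGroup (Fin r) ℂ)) = Set.range ρ := rfl
      exact (this ▸ hrangefin).to_subtype
    haveI : Finite (G ⧸ ρ.ker) := Finite.of_equiv _ (QuotientGroup.quotientKerEquivRange ρ).symm.toEquiv
    haveI : Finite ρ.ker := hker.to_subtype
    exact Finite.of_equiv _ (Subgroup.groupEquivQuotientProdSubgroup (s := ρ.ker)).symm
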